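/- Dynamic Gradual Guarantee (Proposition 3): let e₁ and e₂ be well-typed closed GS expressions with e₁ ⊑ e₂ (e₁ is more precise than e₂). If e₁ evaluates to a value v₁ (i.e., its elaboration reduces in GSCheck to v₁), then e₂ evaluates to a value v₂ with v₁ ⊑ v₂. -/

import Mathlib

open Classical

noncomputable section

namespace GS

/-! ## Base types, constants, primitive operations -/

/-- Base types. -/
inductive BaseTy where
  | real
  | bool
deriving DecidableEq

/-- Constants (literal values of base types). -/
inductive Const where
  | r : ℝ → Const
  | b : Bool → Const

/-- Primitive (binary) operations. -/
inductive Op where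
  | add
  | mul
  | le

/-! ## Gradual sensitivities: sensitivity intervals -/

/-- A gradual sensitivity: a valid interval `[lo,hi]` with `0 ≤ lo ≤ hi ≤ ∞`
over the extended nonnegative reals. The unknown sensitivity `?` is `[0,∞]`
and a fully precise sensitivity `s` is `[s,s]`. -/
structure SI where
  lo : ENNReal
  hi : ENNReal
  isle : lo ≤ hi

/-- Interval addition. -/
def SI.add (a b : SI) : SI := ⟨a.lo + b.lo, a.hi + b.hi, add_le_add a.isle b.isle⟩

/-- Interval multiplication. -/
def SI.mul (a b : SI) : SI := ⟨a.lo * b.lo, a.hi * b.hi, mul_le_mul' a.isle b.isle⟩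

/-- Interval join. -/
def SI.join (a b : SI) : SI := ⟨a.lo ⊔ b.lo, a.hi ⊔ b.hi, sup_le_sup a.isle b.isle⟩

/-- Precision on gradual sensitivities: interval inclusion. -/
def SI.prec (a b : SI) : Prop := b.lo ≤ a.lo ∧ a.hi ≤ b.hi

/-- Consistent sensitivity ordering: `[s₁,s₂] ⪅ [s₃,s₄]` iff `s₁ ≤ s₄`. -/
def SI.cle (a b : SI) : Prop := a.lo ≤ b.hi

/-- A gradual sensitivity is bounded if it does not contain ∞. -/
def SI.bounded (a : SI) : Prop := a.hi ≠ ⊤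

/-- A gradual sensitivity is static (fully precise) if it is a singleton. -/
def SI.static (a : SI) : Prop := a.lo = a.hi

/-- The zero sensitivity. -/
def SI.zero : SI := ⟨0, 0, le_rfl⟩

/-- The infinite sensitivity. -/
def SI.inf : SI := ⟨⊤, ⊤, le_rfl⟩

/-- The unknown sensitivity `? = [0,∞]`. -/
def SI.unknown : SI := ⟨0, ⊤, le_top⟩

/-! ## Gradual sensitivity environments -/

/-- A gradual sensitivity environment: a map from distance variables to
gradual sensitivities. -/
abbrev GEnv := String → SI

/-- Pointwise addition of sensitivity environments. -/
def addE (S1 S2 : GEnv) : GEnv := fun x => (S1 x).add (S2 x)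

/-- Scaling of a sensitivity environment by a gradual sensitivity. -/
def scaleE (g : SI) (S : GEnv) : GEnv := fun x => g.mul (S x)

/-- The empty sensitivity environment ∅. -/
def zeroE : GEnv := fun _ => SI.zero

/-- Pointwise precision of sensitivity environments. -/
def precE (S1 S2 : GEnv) : Prop := ∀ x, (S1 x).prec (S2 x)

/-- A sensitivity environment is bounded if no interval contains ∞. -/
def boundedE (S : GEnv) : Prop := ∀ x, (S x).bounded

/-- Substitution [Sr/r]S of a sensitivity environment for a distance
variable in a sensitivity environment. -/
def substDVE (r : String) (Sr : GEnv) (S : GEnv) : GEnv :=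
  fun y => (if y = r then SI.zero else S y).add ((S r).mul (Sr y))

/-! ## GS types -/

/-- GS types g; `arrow g₁ S₁ g₂ S₂` is the function type g₁^{S₁} → g₂^{S₂};
`all r g S` is the distance abstraction type ∀r. g^{S}. -/
inductive GTy where
  | base : BaseTy → GTy
  | arrow : GTy → GEnv → GTy → GEnv → GTy
  | all : String → GTy → GEnv → GTy

/-- Sensitivity types T = g^Σ. -/
abbrev CTy := GTy × GEnv

/-- Substitution [Sr/r] of a sensitivity environment for a distance variable
in a type (recursively in all nested sensitivity environments, respecting
the ∀-binder). -/
def substT (r : String) (Sr : GEnv) : GTy → GTy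
  | .base B => .base B
  | .arrow g1 S1 g2 S2 =>
      .arrow (substT r Sr g1) (substDVE r Sr S1) (substT r Sr g2) (substDVE r Sr S2)
  | .all r' g S =>
      if r' = r then .all r' g S
      else .all r' (substT r Sr g) (substDVE r Sr S)

/-- Size of a type (used for termination of the logical relations). -/
def GTy.size : GTy → ℕ
  | .base _ => 1
  | .arrow g1 _ g2 _ => g1.size + g2.size + 1
  | .all _ g _ => g.size + 1

theorem size_substT (r : String) (Sr : GEnv) (g : GTy) :
    (substT r Sr g).size = g.size := by
  induction g with
  | base B => rfl
  | arrow g1 S1 g2 S2 ih1 ih2 => simp [substT, GTy.size, ih1, ih2]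
  | all r' g S ih => by_cases h : r' = r <;> simp [substT, h, GTy.size, ih]

/-- Precision on GS types (covariant everywhere). -/
inductive TyPrec : GTy → GTy → Prop
  | base : TyPrec (.base B) (.base B)
  | arrow : TyPrec g1 g1' → precE S1 S1' → TyPrec g2 g2' → precE S2 S2' →
      TyPrec (.arrow g1 S1 g2 S2) (.arrow g1' S1' g2' S2')
  | all : TyPrec g g' → precE S S' →
      TyPrec (.all r g S) (.all r g' S')

/-- Precision on sensitivity types. -/
def CTyPrec (T T' : CTy) : Prop := TyPrec T.1 T'.1 ∧ precE T.2 T'.2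

/-! ## Evidence, interior and consistent transitivity -/

/-- An evidence for a consistent subtyping judgment: a pair of sensitivity
types. -/
abbrev Ev := CTy × CTy

/-- Evidence precision ⊑² (componentwise precision). -/
def EvPrec (ε ε' : Ev) : Prop := CTyPrec ε.1 ε'.1 ∧ CTyPrec ε.2 ε'.2

/-- Interior of two sensitivity environments (pointwise interior of the
consistent sensitivity ordering). -/
def interE (S1 S2 : GEnv) : Option (GEnv × GEnv) :=
  if h : ∀ x, (S1 x).lo ≤ (S2 x).hi then
    some (fun x => ⟨(S1 x).lo, (S1 x).hi ⊓ (S2 x).hi, le_inf (S1 x).isle (h x)⟩,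
          fun x => ⟨(S1 x).lo ⊔ (S2 x).lo, (S2 x).hi, sup_le (h x) (S2 x).isle⟩)
  else none

/-- Interior of two GS types (evidence for a consistent subtyping judgment,
contravariant in function domains). -/
def interT : GTy → GTy → Option (GTy × GTy)
  | .base B1, .base B2 => if B1 = B2 then some (.base B1, .base B2) else none
  | .arrow a1 sa1 b1 sb1, .arrow a2 sa2 b2 sb2 => do
      let (a2', a1') ← interT a2 a1
      let (sa2', sa1') ← interE sa2 sa1
      let (b1', b2') ← interT b1 b2
      let (sb1', sb2') ← interE sb1 sb2
      pure (.arrow a1' sa1' b1' sb1', .arrow a2' sa2' b2' sb2')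
  | .all r1 g1 s1, .all r2 g2 s2 =>
      if r1 = r2 then do
        let (g1', g2') ← interT g1 g2
        let (s1', s2') ← interE s1 s2
        pure (.all r1 g1' s1', .all r2 g2' s2')
      else none
  | _, _ => none
termination_by t1 t2 => t1.size + t2.size
decreasing_by all_goals simp [GTy.size] <;> omega

/-- Interior of two sensitivity types: the initial evidence for their
consistent subtyping judgment. -/
def interC (T1 T2 : CTy) : Option Ev := do
  let (g1, g2) ← interT T1.1 T2.1
  let (s1, s2) ← interE T1.2 T2.2
  pure ((g1, s1), (g2, s2))

/-- Consistent transitivity on (pointwise) sensitivity environments: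
combines evidences ⟨s1,s2⟩ and ⟨s3,s4⟩. -/
def ctrE (s1 s2 s3 s4 : GEnv) : Option (GEnv × GEnv) :=
  if h : ∀ x, (s1 x).lo ≤ (s1 x).hi ⊓ (s2 x).hi ⊓ (s3 x).hi ∧
              (s2 x).lo ⊔ (s3 x).lo ⊔ (s4 x).lo ≤ (s4 x).hi then
    some (fun x => ⟨(s1 x).lo, (s1 x).hi ⊓ (s2 x).hi ⊓ (s3 x).hi, (h x).1⟩,
          fun x => ⟨(s2 x).lo ⊔ (s3 x).lo ⊔ (s4 x).lo, (s4 x).hi, (h x).2⟩)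
  else none

/-- Consistent transitivity on GS types: combines evidences ⟨t1,t2⟩ and
⟨t3,t4⟩ (contravariant in function domains). -/
def ctrT : GTy → GTy → GTy → GTy → Option (GTy × GTy)
  | .base B1, .base B2, .base B3, .base B4 =>
      if B1 = B2 ∧ B2 = B3 ∧ B3 = B4 then some (.base B1, .base B4) else none
  | .arrow a1 sa1 b1 sb1, .arrow a2 sa2 b2 sb2,
    .arrow a3 sa3 b3 sb3, .arrow a4 sa4 b4 sb4 => do
      let (a4', a1') ← ctrT a4 a3 a2 a1
      let (sa4', sa1') ← ctrE sa4 sa3 sa2 sa1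
      let (b1', b4') ← ctrT b1 b2 b3 b4
      let (sb1', sb4') ← ctrE sb1 sb2 sb3 sb4
      pure (.arrow a1' sa1' b1' sb1', .arrow a4' sa4' b4' sb4')
  | .all r1 g1 s1, .all r2 g2 s2, .all r3 g3 s3, .all r4 g4 s4 =>
      if r1 = r2 ∧ r2 = r3 ∧ r3 = r4 then do
        let (g1', g4') ← ctrT g1 g2 g3 g4
        let (s1', s4') ← ctrE s1 s2 s3 s4
        pure (.all r1 g1' s1', .all r4 g4' s4')
      else none
  | _, _, _, _ => none
termination_by t1 t2 t3 t4 => t1.size + t2.size + t3.size + t4.size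
decreasing_by all_goals simp [GTy.size] <;> omega

/-- Consistent transitivity on evidences: ε₁ ∘ ε₂, undefined when transitivity
is refuted. -/
def ctrC (e1 e2 : Ev) : Option Ev := do
  let (g1, g4) ← ctrT e1.1.1 e1.2.1 e2.1.1 e2.2.1
  let (s1, s4) ← ctrE e1.1.2 e1.2.2 e2.1.2 e2.2.2
  pure ((g1, s1), (g4, s4))

/-! ## GSCheck: the internal evidence language -/

/-- GSCheck expressions: ascriptions `ascr ε e T` carry an evidence ε and an
ascribed sensitivity type T; `err` is the runtime error term. -/
inductive CExpr where
  | const : Const → CExpr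
  | op : Op → CExpr → CExpr → CExpr
  | var : String → CExpr
  | lam : String → CTy → CExpr → CExpr
  | app : CExpr → CExpr → CExpr
  | tlam : String → CExpr → CExpr
  | tapp : CExpr → GEnv → CExpr
  | ascr : Ev → CExpr → CTy → CExpr
  | err : CExpr

mutual
/-- Simple values u ::= c | λ(x:T).e | Λr.v. -/
inductive Simple : CExpr → Prop
  | const : Simple (.const c)
  | lam : Simple (.lam x T e)
  | tlam : IsVal v → Simple (.tlam r v)
/-- Values v ::= ε u :: T. -/
inductive IsVal : CExpr → Prop
  | mk : Simple u → IsVal (.ascr ε u T)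
end

/-- Term substitution. -/
def csubst (x : String) (v : CExpr) : CExpr → CExpr
  | .const c => .const c
  | .op o a b => .op o (csubst x v a) (csubst x v b)
  | .var y => if y = x then v else .var y
  | .lam y T e => if y = x then .lam y T e else .lam y T (csubst x v e)
  | .app a b => .app (csubst x v a) (csubst x v b)
  | .tlam r e => .tlam r (csubst x v e)
  | .tapp e S => .tapp (csubst x v e) S
  | .ascr ε e T => .ascr ε (csubst x v e) T
  | .err => .err

/-- Substitution of a distance variable in a sensitivity type. -/
def substCTy (r : String) (Sr : GEnv) (T : CTy) : CTy :=
  (substT r Sr T.1, substDVE r Sr T.2)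

/-- Substitution of a distance variable in an evidence. -/
def substEv (r : String) (Sr : GEnv) (ε : Ev) : Ev :=
  (substCTy r Sr ε.1, substCTy r Sr ε.2)

/-- Substitution of a distance variable in a GSCheck expression. -/
def dsubst (r : String) (Sr : GEnv) : CExpr → CExpr
  | .const c => .const c
  | .op o a b => .op o (dsubst r Sr a) (dsubst r Sr b)
  | .var y => .var y
  | .lam y T e => .lam y (substCTy r Sr T) (dsubst r Sr e)
  | .app a b => .app (dsubst r Sr a) (dsubst r Sr b)
  | .tlam r' e => if r' = r then .tlam r' e else .tlam r' (dsubst r Sr e)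
  | .tapp e S => .tapp (dsubst r Sr e) (substDVE r Sr S)
  | .ascr ε e T => .ascr (substEv r Sr ε) (dsubst r Sr e) (substCTy r Sr T)
  | .err => .err

/-- Denotation of the primitive operations. -/
def opDenote : Op → Const → Const → Option Const
  | .add, .r a, .r b => some (.r (a + b))
  | .mul, .r a, .r b => some (.r (a * b))
  | .le, .r a, .r b => some (.b (if a ≤ b then true else false))
  | _, _, _ => none

/-- Sensitivity typing of the primitive operations: addition adds the
sensitivity environments; multiplication and comparison scale by ∞. -/
def opCTy : Op → CTy → CTy → Option CTy
  | .add, (.base .real, S1), (.base .real, S2) => some (.base .real, addE S1 S2)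
  | .mul, (.base .real, S1), (.base .real, S2) =>
      some (.base .real, scaleE SI.inf (addE S1 S2))
  | .le, (.base .real, S1), (.base .real, S2) =>
      some (.base .bool, scaleE SI.inf (addE S1 S2))
  | _, _, _ => none

/-- Lifting of operation typing to evidences. -/
def opEv (o : Op) (ε1 ε2 : Ev) : Option Ev := do
  let a ← opCTy o ε1.1 ε2.1
  let b ← opCTy o ε1.2 ε2.2
  pure (a, b)

/-- Domain of a function sensitivity type. -/
def domC : CTy → Option CTy
  | (.arrow g1 S1 _ _, _) => some (g1, S1)
  | _ => none

/-- Codomain of a function sensitivity type (adding the function's own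
top-level sensitivity environment). -/
def codC : CTy → Option CTy
  | (.arrow _ _ g2 S2, S) => some (g2, addE S2 S)
  | _ => none

/-- Instantiation of a distance-abstraction sensitivity type. -/
def instC (T : CTy) (Sr : GEnv) : Option CTy :=
  match T with
  | (.all r g Sg, S) => some (substT r Sr g, addE (substDVE r Sr Sg) S)
  | _ => none

/-- Inversion of an evidence for the domain (contravariant). -/
def domEv (ε : Ev) : Option Ev := do
  let d2 ← domC ε.2
  let d1 ← domC ε.1
  pure (d2, d1)

/-- Inversion of an evidence for the codomain. -/
def codEv (ε : Ev) : Option Ev := do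
  let c1 ← codC ε.1
  let c2 ← codC ε.2
  pure (c1, c2)

/-- Inversion of an evidence for instantiation. -/
def instEv (ε : Ev) (Sr : GEnv) : Option Ev := do
  let i1 ← instC ε.1 Sr
  let i2 ← instC ε.2 Sr
  pure (i1, i2)

/-- Reduction of GSCheck (the notions of reduction of Figure 6 together with
the congruence closure under evaluation contexts and error propagation). -/
inductive Step : CExpr → CExpr → Prop
  | op : opDenote o c1 c2 = some c → opEv o ε1 ε2 = some ε → opCTy o T1 T2 = some T →
      Step (.op o (.ascr ε1 (.const c1) T1) (.ascr ε2 (.const c2) T2))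
           (.ascr ε (.const c) T)
  | appOk : Simple u → domEv ε = some εd → ctrC ε1 εd = some ε' →
      codEv ε = some εc → codC T = some Tc →
      Step (.app (.ascr ε (.lam x T1' eb) T) (.ascr ε1 u T1))
           (.ascr εc (csubst x (.ascr ε' u T1') eb) Tc)
  | appErr : Simple u → domEv ε = some εd → ctrC ε1 εd = none →
      Step (.app (.ascr ε (.lam x T1' eb) T) (.ascr ε1 u T1)) .err
  | inst : IsVal v → instEv ε Sr = some ε' → instC T Sr = some T' →
      Step (.tapp (.ascr ε (.tlam r v) T) Sr) (.ascr ε' (dsubst r Sr v) T')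
  | ascrOk : Simple u → ctrC ε' ε = some ε'' →
      Step (.ascr ε (.ascr ε' u T') T) (.ascr ε'' u T)
  | ascrErr : Simple u → ctrC ε' ε = none →
      Step (.ascr ε (.ascr ε' u T') T) .err
  -- congruence (evaluation contexts)
  | opL : Step e1 e1' → Step (.op o e1 e2) (.op o e1' e2)
  | opR : IsVal v → Step e2 e2' → Step (.op o v e2) (.op o v e2')
  | appL : Step e1 e1' → Step (.app e1 e2) (.app e1' e2)
  | appR : IsVal v → Step e2 e2' → Step (.app v e2) (.app v e2')
  | tappC : Step e e' → Step (.tapp e S) (.tapp e' S)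
  | tlamC : Step e e' → Step (.tlam r e) (.tlam r e')
  | ascrC : Step e e' → Step (.ascr ε e T) (.ascr ε e' T)
  -- error propagation
  | opLErr : Step (.op o .err e2) .err
  | opRErr : IsVal v → Step (.op o v .err) .err
  | appLErr : Step (.app .err e2) .err
  | appRErr : IsVal v → Step (.app v .err) .err
  | tappErr : Step (.tapp .err S) .err
  | tlamErr : Step (.tlam r .err) .err
  | ascrErrP : Step (.ascr ε .err T) .err

/-- Zero or more reduction steps. -/
def Steps : CExpr → CExpr → Prop := Relation.ReflTransGen Step

/-- e ⇓ v : e reduces to the value v. -/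
def EvalsTo (e v : CExpr) : Prop := Steps e v ∧ IsVal v

/-- e ⇓ error. -/
def EvalsErr (e : CExpr) : Prop := Steps e .err

/-- Applying a substitution γ (a value environment) to a GSCheck expression. -/
def cmsubst (γ : String → CExpr) : CExpr → CExpr
  | .const c => .const c
  | .op o a b => .op o (cmsubst γ a) (cmsubst γ b)
  | .var y => γ y
  | .lam y T e => .lam y T (cmsubst (Function.update γ y (.var y)) e)
  | .app a b => .app (cmsubst γ a) (cmsubst γ b)
  | .tlam r e => .tlam r (cmsubst γ e)
  | .tapp e S => .tapp (cmsubst γ e) S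
  | .ascr ε e T => .ascr ε (cmsubst γ e) T
  | .err => .err

/-! ## Monitors, distances, canonical forms -/

/-- The monitor of a value: its evidence. -/
def monOf : CExpr → Option Ev
  | .ascr ε _ _ => some ε
  | _ => none

/-- The monitored sensitivity of a value: the static environment of lower
bounds of the sensitivity environment of the right-hand component of its
evidence. -/
def msOf : CExpr → String → ENNReal
  | .ascr (_, (_, S')) _ _ => fun r => (S' r).lo
  | _ => fun _ => 0

/-- Equi-precise monitors (each is more precise than the other). -/
def EquiEv (v1 v2 : CExpr) : Prop :=
  ∃ ε1 ε2, monOf v1 = some ε1 ∧ monOf v2 = some ε2 ∧ EvPrec ε1 ε2 ∧ EvPrec ε2 ε1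

/-- Canonical forms of a base type. -/
def CanonC (B : BaseTy) (v : CExpr) : Prop :=
  match B, v with
  | .real, .ascr _ (.const (.r _)) _ => True
  | .bool, .ascr _ (.const (.b _)) _ => True
  | _, _ => False

/-- The metric d_B on canonical forms of base types. -/
def dBC (B : BaseTy) (v1 v2 : CExpr) : ENNReal :=
  match B, v1, v2 with
  | .real, .ascr _ (.const (.r a)) _, .ascr _ (.const (.r b)) _ =>
      ENNReal.ofReal |a - b|
  | .bool, .ascr _ (.const (.b a)) _, .ascr _ (.const (.b b)) _ =>
      if a = b then 0 else ⊤
  | _, _, _ => ⊤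

/-- Distance environments: maps from distance variables to distances. -/
abbrev DEnv := String → ENNReal

/-- A distance environment is bounded if it avoids ∞. -/
def boundedD (dl : DEnv) : Prop := ∀ r, dl r ≠ ⊤

/-- Σ·δ for a static (fully precise) sensitivity environment Σ. -/
def dot (S : String → ENNReal) (dl : DEnv) : ENNReal := ∑' r, S r * dl r

/-- A static environment Σ' is (pointwise) within the gradual environment Σ,
i.e. Σ' is a static environment more precise than Σ. -/
def staticPrec (S' : String → ENNReal) (S : GEnv) : Prop :=
  ∀ r, (S r).lo ≤ S' r ∧ S' r ≤ (S r).hi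

/-! ## Logical relations (Figure 4): termination-insensitive -/

/-- Value logical relation (v₁,v₂) ∈ V_δ⟦g^Σ⟧ (Figure 4); the computation
relation E is inlined in the arrow and ∀ cases. -/
def Vrel (dl : DEnv) : GTy → GEnv → CExpr → CExpr → Prop
  | .base B, _, v1, v2 =>
      CanonC B v1 ∧ CanonC B v2 ∧
      dBC B v1 v2 ≤ dot (fun r => msOf v1 r ⊔ msOf v2 r) dl
  | .arrow g1 S1 g2 S2, S, v1, v2 =>
      IsVal v1 ∧ IsVal v2 ∧
      ∀ v1' v2', Vrel dl g1 S1 v1' v2' →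
        ∀ w1 w2, EvalsTo (.app v1 v1') w1 → EvalsTo (.app v2 v2') w2 →
          Vrel dl g2 (addE S2 S) w1 w2
  | .all r g Sg, S, v1, v2 =>
      IsVal v1 ∧ IsVal v2 ∧
      ∀ Sr, ∀ w1 w2, EvalsTo (.tapp v1 Sr) w1 → EvalsTo (.tapp v2 Sr) w2 →
        Vrel dl (substT r Sr g) (addE (substDVE r Sr Sg) S) w1 w2
termination_by g _ _ _ => g.size
decreasing_by all_goals simp [GTy.size, size_substT] <;> omega

/-- Computation logical relation (e₁,e₂) ∈ E_δ⟦g^Σ⟧. -/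
def Erel (dl : DEnv) (g : GTy) (S : GEnv) (e1 e2 : CExpr) : Prop :=
  ∀ v1 v2, EvalsTo e1 v1 → EvalsTo e2 v2 → Vrel dl g S v1 v2

/-- Type environments. -/
abbrev GTEnv := String → Option CTy

/-- Related substitutions (γ₁,γ₂) ∈ G_δ⟦Γ⟧. -/
def Grel (dl : DEnv) (Γ : GTEnv) (γ1 γ2 : String → CExpr) : Prop :=
  ∀ x T, Γ x = some T → Vrel dl T.1 T.2 (γ1 x) (γ2 x)

/-- Semantic gradual sensitivity typing Γ ⊨ e : T. -/
def SemGTy (Γ : GTEnv) (e : CExpr) (T : CTy) : Prop :=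
  ∀ dl γ1 γ2, Grel dl Γ γ1 γ2 → Erel dl T.1 T.2 (cmsubst γ1 e) (cmsubst γ2 e)

/-! ## Logical relations (Figure 5): termination-sensitive -/

/-- Termination-sensitive value logical relation (v₁,v₂) ∈ Vᵗˢ_δ⟦g^Σ⟧
(Figure 5); the computation relation Eᵗˢ is inlined in the arrow and ∀
cases. -/
def VrelTS (dl : DEnv) : GTy → GEnv → CExpr → CExpr → Prop
  | .base B, _, v1, v2 =>
      EquiEv v1 v2 ∧ CanonC B v1 ∧ CanonC B v2 ∧
      dBC B v1 v2 ≤ dot (fun r => msOf v1 r ⊔ msOf v2 r) dl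
  | .arrow g1 S1 g2 S2, S, v1, v2 =>
      EquiEv v1 v2 ∧ IsVal v1 ∧ IsVal v2 ∧
      ∀ v1' v2', VrelTS dl g1 S1 v1' v2' →
        ∀ w1, EvalsTo (.app v1 v1') w1 →
          ∃ w2, EvalsTo (.app v2 v2') w2 ∧ VrelTS dl g2 (addE S2 S) w1 w2
  | .all r g Sg, S, v1, v2 =>
      EquiEv v1 v2 ∧ IsVal v1 ∧ IsVal v2 ∧
      ∀ Sr, boundedE Sr →
        ∀ w1, EvalsTo (.tapp v1 Sr) w1 →
          ∃ w2, EvalsTo (.tapp v2 Sr) w2 ∧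
            VrelTS dl (substT r Sr g) (addE (substDVE r Sr Sg) S) w1 w2
termination_by g _ _ _ => g.size
decreasing_by all_goals simp [GTy.size, size_substT] <;> omega

/-- Termination-sensitive computation logical relation. -/
def ErelTS (dl : DEnv) (g : GTy) (S : GEnv) (e1 e2 : CExpr) : Prop :=
  ∀ v1, EvalsTo e1 v1 → ∃ v2, EvalsTo e2 v2 ∧ VrelTS dl g S v1 v2

/-- Termination-sensitive related substitutions (γ₁,γ₂) ∈ Gᵗˢ_δ⟦Γ⟧ (requires
a bounded distance environment). -/
def GrelTS (dl : DEnv) (Γ : GTEnv) (γ1 γ2 : String → CExpr) : Prop :=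
  boundedD dl ∧ ∀ x T, Γ x = some T → VrelTS dl T.1 T.2 (γ1 x) (γ2 x)

/-- Termination-sensitive semantic gradual sensitivity typing Γ ⊨ᵗˢ e : g^Σ
(requires the top-level sensitivity environment to be bounded). -/
def SemGTyTS (Γ : GTEnv) (e : CExpr) (T : CTy) : Prop :=
  boundedE T.2 ∧
  ∀ dl γ1 γ2, GrelTS dl Γ γ1 γ2 → ErelTS dl T.1 T.2 (cmsubst γ1 e) (cmsubst γ2 e)

/-! ## Gradual metric preservation -/

/-- δ-proximity of two substitutions for a base-type environment Γ:
values are canonical forms at bounded distance as measured by the join of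
their monitored sensitivities. -/
def Proximate (dl : DEnv) (Γ : GTEnv) (γ1 γ2 : String → CExpr) : Prop :=
  ∀ x B S, Γ x = some (.base B, S) →
    CanonC B (γ1 x) ∧ CanonC B (γ2 x) ∧
    dBC B (γ1 x) (γ2 x) ≤ dot (fun r => msOf (γ1 x) r ⊔ msOf (γ2 x) r) dl

/-- Termination-sensitive δ-proximity: additionally δ is bounded and
corresponding values carry equi-precise evidences. -/
def ProximateTS (dl : DEnv) (Γ : GTEnv) (γ1 γ2 : String → CExpr) : Prop :=
  boundedD dl ∧
  ∀ x B S, Γ x = some (.base B, S) →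
    EquiEv (γ1 x) (γ2 x) ∧ CanonC B (γ1 x) ∧ CanonC B (γ2 x) ∧
    dBC B (γ1 x) (γ2 x) ≤ dot (fun r => msOf (γ1 x) r ⊔ msOf (γ2 x) r) dl

/-- Gradual metric preservation GMP(Γ, e, B, Σ). -/
def GMP (Γ : GTEnv) (e : CExpr) (B : BaseTy) (S : GEnv) : Prop :=
  ∀ dl γ1 γ2, Proximate dl Γ γ1 γ2 →
    ∀ v1 v2, EvalsTo (cmsubst γ1 e) v1 → EvalsTo (cmsubst γ2 e) v2 →
      ∃ S' : String → ENNReal, staticPrec S' S ∧ dBC B v1 v2 ≤ dot S' dl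

/-- Termination-sensitive gradual metric preservation GMPᵗˢ(Γ, e, B, Σ). -/
def GMPts (Γ : GTEnv) (e : CExpr) (B : BaseTy) (S : GEnv) : Prop :=
  ∀ dl γ1 γ2, ProximateTS dl Γ γ1 γ2 →
    ∀ v1, EvalsTo (cmsubst γ1 e) v1 →
      ∃ v2, EvalsTo (cmsubst γ2 e) v2 ∧
        ∃ S' : String → ENNReal, staticPrec S' S ∧ dBC B v1 v2 ≤ dot S' dl

/-! ## The source language GS and type-directed elaboration (Figure 7) -/

/-- GS source expressions. -/
inductive GExpr where
  | const : Const → GExpr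
  | op : Op → GExpr → GExpr → GExpr
  | var : String → GExpr
  | lam : String → CTy → GExpr → GExpr
  | app : GExpr → GExpr → GExpr
  | tlam : String → GExpr → GExpr
  | tapp : GExpr → GEnv → GExpr
  | ascr : GExpr → CTy → GExpr

/-- The base type of a constant. -/
def constBTy : Const → BaseTy
  | .r _ => .real
  | .b _ => .bool

/-- Type-directed elaboration Γ ⊢ e ⇝ e' : T from GS to GSCheck (Figure 7);
it doubles as the syntactic type system of GS. -/
inductive Elab : GTEnv → GExpr → CExpr → CTy → Prop
  | const : interC (.base (constBTy c), zeroE) (.base (constBTy c), zeroE) = some ε →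
      Elab Γ (.const c) (.ascr ε (.const c) (.base (constBTy c), zeroE))
        (.base (constBTy c), zeroE)
  | op : Elab Γ a a' Ta → Elab Γ b b' Tb → opCTy o Ta Tb = some T →
      Elab Γ (.op o a b) (.op o a' b') T
  | var : Γ x = some T → Elab Γ (.var x) (.var x) T
  | lam : Elab (Function.update Γ x (some T1)) e e' T2 →
      interC (.arrow T1.1 T1.2 T2.1 T2.2, zeroE) (.arrow T1.1 T1.2 T2.1 T2.2, zeroE)
        = some ε →
      Elab Γ (.lam x T1 e)
        (.ascr ε (.lam x T1 e') (.arrow T1.1 T1.2 T2.1 T2.2, zeroE))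
        (.arrow T1.1 T1.2 T2.1 T2.2, zeroE)
  | app : Elab Γ a a' Ta → Elab Γ b b' Tb →
      domC Ta = some Td → interC Tb Td = some ε2 → codC Ta = some Tc →
      Elab Γ (.app a b) (.app a' (.ascr ε2 b' Td)) Tc
  | tlam : Elab Γ e e' T →
      interC (.all r T.1 T.2, zeroE) (.all r T.1 T.2, zeroE) = some ε →
      Elab Γ (.tlam r e) (.ascr ε (.tlam r e') (.all r T.1 T.2, zeroE))
        (.all r T.1 T.2, zeroE)
  | tapp : Elab Γ e e' T → instC T Sr = some T' →
      Elab Γ (.tapp e Sr) (.tapp e' Sr) T'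
  | ascr : Elab Γ e e' T → interC T T' = some ε →
      Elab Γ (.ascr e T') (.ascr ε e' T') T'

/-- The empty type environment. -/
def emptyEnv : GTEnv := fun _ => none

/-! ## Precision on expressions -/

/-- Precision on GS source expressions (the natural syntactic lifting of type
precision to terms). -/
inductive GPrec : GExpr → GExpr → Prop
  | const : GPrec (.const c) (.const c)
  | op : GPrec a a' → GPrec b b' → GPrec (.op o a b) (.op o a' b')
  | var : GPrec (.var x) (.var x)
  | lam : CTyPrec T T' → GPrec e e' → GPrec (.lam x T e) (.lam x T' e')
  | app : GPrec a a' → GPrec b b' → GPrec (.app a b) (.app a' b')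
  | tlam : GPrec e e' → GPrec (.tlam r e) (.tlam r e')
  | tapp : GPrec e e' → precE S S' → GPrec (.tapp e S) (.tapp e' S')
  | ascr : GPrec e e' → CTyPrec T T' → GPrec (.ascr e T) (.ascr e' T')

/-- Precision on GSCheck expressions (including evidences). -/
inductive CPrec : CExpr → CExpr → Prop
  | const : CPrec (.const c) (.const c)
  | op : CPrec a a' → CPrec b b' → CPrec (.op o a b) (.op o a' b')
  | var : CPrec (.var x) (.var x)
  | lam : CTyPrec T T' → CPrec e e' → CPrec (.lam x T e) (.lam x T' e')
  | app : CPrec a a' → CPrec b b' → CPrec (.app a b) (.app a' b')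
  | tlam : CPrec e e' → CPrec (.tlam r e) (.tlam r e')
  | tapp : CPrec e e' → precE S S' → CPrec (.tapp e S) (.tapp e' S')
  | ascr : EvPrec ε ε' → CPrec e e' → CTyPrec T T' →
      CPrec (.ascr ε e T) (.ascr ε' e' T')
  | err : CPrec .err .err

/-! ## Auxiliary lemmas -/

theorem aux_SI_prec_refl (a : SI) : a.prec a := ⟨le_rfl, le_rfl⟩

theorem aux_precE_refl (S : GEnv) : precE S S := fun _ => aux_SI_prec_refl _

theorem aux_TyPrec_refl : ∀ g : GTy, TyPrec g g
  | .base _ => .base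
  | .arrow g1 S1 g2 S2 => .arrow (aux_TyPrec_refl g1) (aux_precE_refl S1)
      (aux_TyPrec_refl g2) (aux_precE_refl S2)
  | .all _ g S => .all (aux_TyPrec_refl g) (aux_precE_refl S)

theorem aux_CTyPrec_refl (T : CTy) : CTyPrec T T := ⟨aux_TyPrec_refl _, aux_precE_refl _⟩

theorem aux_EvPrec_refl (ε : Ev) : EvPrec ε ε := ⟨aux_CTyPrec_refl _, aux_CTyPrec_refl _⟩

theorem aux_SI_add_mono {a a' b b' : SI} (ha : a.prec a') (hb : b.prec b') :
    (a.add b).prec (a'.add b') :=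
  ⟨add_le_add ha.1 hb.1, add_le_add ha.2 hb.2⟩

theorem aux_SI_mul_mono {a a' b b' : SI} (ha : a.prec a') (hb : b.prec b') :
    (a.mul b).prec (a'.mul b') :=
  ⟨mul_le_mul' ha.1 hb.1, mul_le_mul' ha.2 hb.2⟩

theorem aux_addE_mono {S1 S1' S2 S2' : GEnv} (h1 : precE S1 S1') (h2 : precE S2 S2') :
    precE (addE S1 S2) (addE S1' S2') := fun x => aux_SI_add_mono (h1 x) (h2 x)

theorem aux_scaleE_mono {g : SI} {S S' : GEnv} (h : precE S S') :
    precE (scaleE g S) (scaleE g S') := fun x => aux_SI_mul_mono (aux_SI_prec_refl g) (h x)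

theorem aux_substDVE_mono {r : String} {Sr Sr' S S' : GEnv}
    (hr : precE Sr Sr') (h : precE S S') :
    precE (substDVE r Sr S) (substDVE r Sr' S') := by
  intro y
  unfold substDVE
  exact aux_SI_add_mono
    (by by_cases hy : y = r <;> simp [hy, aux_SI_prec_refl, h y])
    (aux_SI_mul_mono (h r) (hr y))

theorem aux_substT_mono {r : String} {Sr Sr' : GEnv} (hr : precE Sr Sr') :
    ∀ {g g'}, TyPrec g g' → TyPrec (substT r Sr g) (substT r Sr' g') := by
  intro g g' h
  induction h with
  | base => exact .base
  | arrow h1 hS1 h2 hS2 ih1 ih2 =>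
      exact .arrow ih1 (aux_substDVE_mono hr hS1) ih2 (aux_substDVE_mono hr hS2)
  | @all g g' S S' r' h hS ih =>
      by_cases hrr : r' = r
      · simp only [substT, hrr, if_true]
        exact .all h hS
      · simp only [substT, hrr, if_false]
        exact .all ih (aux_substDVE_mono hr hS)

theorem aux_interE_mono {S1 S1' S2 S2' a b : GEnv}
    (h1 : precE S1 S1') (h2 : precE S2 S2')
    (h : interE S1 S2 = some (a, b)) :
    ∃ a' b', interE S1' S2' = some (a', b') ∧ precE a a' ∧ precE b b' := by
  unfold interE at h ⊢
  split at h
  case isFalse => exact absurd h (by simp)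
  case isTrue hc =>
    have hc' : ∀ x, (S1' x).lo ≤ (S2' x).hi := fun x =>
      le_trans (h1 x).1 (le_trans (hc x) (h2 x).2)
    simp only [Option.some.injEq, Prod.mk.injEq] at h
    obtain ⟨ha, hb⟩ := h
    refine ⟨_, _, by rw [dif_pos hc'], ?_, ?_⟩
    · subst ha; intro x
      exact ⟨(h1 x).1, le_inf (le_trans inf_le_left (h1 x).2) (le_trans inf_le_right (h2 x).2)⟩
    · subst hb; intro x
      exact ⟨sup_le (le_trans (h1 x).1 le_sup_left) (le_trans (h2 x).1 le_sup_right), (h2 x).2⟩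
theorem aux_interT_mono : ∀ n {t1 t2 t1' t2' a b}, t1.size + t2.size ≤ n →
    TyPrec t1 t1' → TyPrec t2 t2' → interT t1 t2 = some (a, b) →
    ∃ a' b', interT t1' t2' = some (a', b') ∧ TyPrec a a' ∧ TyPrec b b' := by
  intro n
  induction n with
  | zero => intro t1 t2 _ _ _ _ hn; cases t1 <;> simp [GTy.size] at hn
  | succ n ih =>
    intro t1 t2 t1' t2' a b hn hp1 hp2 h
    cases hp1 with
    | @base B =>
      cases hp2 with
      | @base B' =>
        rw [interT.eq_1] at h
        split at h
        · rename_i hB; subst hB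
          simp only [Option.some.injEq, Prod.mk.injEq] at h
          obtain ⟨ha, hb⟩ := h; subst ha; subst hb
          exact ⟨_, _, by rw [interT.eq_1]; simp, .base, .base⟩
        · exact absurd h (by simp)
      | arrow _ _ _ _ => rw [interT.eq_def] at h; simp at h
      | all _ _ => rw [interT.eq_def] at h; simp at h
    | @arrow g1 g1' S1 S1' g2 g2' S2 S2' hg1 hS1 hg2 hS2 =>
      cases hp2 with
      | @base B => rw [interT.eq_def] at h; simp at h
      | @arrow f1 f1' R1 R1' f2 f2' R2 R2' hf1 hR1 hf2 hR2 =>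
        rw [interT.eq_2] at h
        simp only [Bind.bind, Option.bind_eq_some_iff, Option.pure_def, Option.some.injEq,
          Prod.mk.injEq, Prod.exists] at h
        obtain ⟨x1, x2, hx, y1, y2, hy, z1, z2, hz, w1, w2, hw, hab⟩ := h
        simp [GTy.size] at hn
        obtain ⟨X1, X2, hX, hpx1, hpx2⟩ := ih (by omega) hf1 hg1 hx
        obtain ⟨Y1, Y2, hY, hpy1, hpy2⟩ := aux_interE_mono hR1 hS1 hy
        obtain ⟨Z1, Z2, hZ, hpz1, hpz2⟩ := ih (by omega) hg2 hf2 hz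
        obtain ⟨W1, W2, hW, hpw1, hpw2⟩ := aux_interE_mono hS2 hR2 hw
        obtain ⟨ha, hb⟩ := hab; subst ha; subst hb
        refine ⟨X2.arrow Y2 Z1 W1, X1.arrow Y1 Z2 W2, ?_,
          .arrow hpx2 hpy2 hpz1 hpw1, .arrow hpx1 hpy1 hpz2 hpw2⟩
        rw [interT.eq_2]
        simp [hX, hY, hZ, hW]
      | all _ _ => rw [interT.eq_def] at h; simp at h
    | @all g g' S S' r hg hS =>
      cases hp2 with
      | @base B => rw [interT.eq_def] at h; simp at h
      | arrow _ _ _ _ => rw [interT.eq_def] at h; simp at h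
      | @all f f' R R' r' hf hR =>
        rw [interT.eq_3] at h
        split at h
        · rename_i hr; subst hr
          simp only [Bind.bind, Option.bind_eq_some_iff, Option.pure_def, Option.some.injEq,
            Prod.mk.injEq, Prod.exists] at h
          obtain ⟨x1, x2, hx, y1, y2, hy, hab⟩ := h
          simp [GTy.size] at hn
          obtain ⟨X1, X2, hX, hpx1, hpx2⟩ := ih (by omega) hg hf hx
          obtain ⟨Y1, Y2, hY, hpy1, hpy2⟩ := aux_interE_mono hS hR hy
          obtain ⟨ha, hb⟩ := hab; subst ha; subst hb
          refine ⟨.all r X1 Y1, .all r X2 Y2, ?_, .all hpx1 hpy1, .all hpx2 hpy2⟩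
          rw [interT.eq_3]
          simp [hX, hY]
        · exact absurd h (by simp)

theorem aux_interC_mono {T1 T1' T2 T2' : CTy} {ε : Ev}
    (h1 : CTyPrec T1 T1') (h2 : CTyPrec T2 T2')
    (h : interC T1 T2 = some ε) :
    ∃ ε', interC T1' T2' = some ε' ∧ EvPrec ε ε' := by
  unfold interC at h ⊢
  simp only [Bind.bind, Option.bind_eq_some_iff, Option.pure_def, Option.some.injEq,
    Prod.mk.injEq, Prod.exists] at h ⊢
  obtain ⟨g1, g2, hg, s1, s2, hs, hε⟩ := h
  obtain ⟨G1, G2, hG, hpg1, hpg2⟩ := aux_interT_mono (T1.1.size + T2.1.size) le_rfl h1.1 h2.1 hg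
  obtain ⟨S1, S2, hS, hps1, hps2⟩ := aux_interE_mono h1.2 h2.2 hs
  subst hε
  exact ⟨G1, S1, G2, S2, ⟨_, _, hG, _, _, hS, ⟨rfl, rfl⟩, rfl, rfl⟩,
    ⟨⟨hpg1, hps1⟩, ⟨hpg2, hps2⟩⟩⟩
theorem aux_ctrE_mono {s1 s1' s2 s2' s3 s3' s4 s4' a b : GEnv}
    (h1 : precE s1 s1') (h2 : precE s2 s2') (h3 : precE s3 s3') (h4 : precE s4 s4')
    (h : ctrE s1 s2 s3 s4 = some (a, b)) :
    ∃ a' b', ctrE s1' s2' s3' s4' = some (a', b') ∧ precE a a' ∧ precE b b' := by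
  unfold ctrE at h ⊢
  split at h
  case isFalse => exact absurd h (by simp)
  case isTrue hc =>
    have hc' : ∀ x, (s1' x).lo ≤ (s1' x).hi ⊓ (s2' x).hi ⊓ (s3' x).hi ∧
        (s2' x).lo ⊔ (s3' x).lo ⊔ (s4' x).lo ≤ (s4' x).hi := by
      intro x
      constructor
      · refine le_trans (h1 x).1 (le_trans (hc x).1 ?_)
        exact inf_le_inf (inf_le_inf (h1 x).2 (h2 x).2) (h3 x).2
      · refine le_trans ?_ (le_trans (hc x).2 (h4 x).2)
        exact sup_le_sup (sup_le_sup (h2 x).1 (h3 x).1) (h4 x).1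
    simp only [Option.some.injEq, Prod.mk.injEq] at h
    obtain ⟨ha, hb⟩ := h; subst ha; subst hb
    refine ⟨_, _, by rw [dif_pos hc'], ?_, ?_⟩
    · intro x
      exact ⟨(h1 x).1, inf_le_inf (inf_le_inf (h1 x).2 (h2 x).2) (h3 x).2⟩
    · intro x
      exact ⟨sup_le_sup (sup_le_sup (h2 x).1 (h3 x).1) (h4 x).1, (h4 x).2⟩

theorem aux_ctrT_mono : ∀ n {t1 t2 t3 t4 t1' t2' t3' t4' a b},
    t1.size + t2.size + t3.size + t4.size ≤ n →
    TyPrec t1 t1' → TyPrec t2 t2' → TyPrec t3 t3' → TyPrec t4 t4' →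
    ctrT t1 t2 t3 t4 = some (a, b) →
    ∃ a' b', ctrT t1' t2' t3' t4' = some (a', b') ∧ TyPrec a a' ∧ TyPrec b b' := by
  intro n
  induction n with
  | zero => intro t1 t2 t3 t4 _ _ _ _ _ _ hn; cases t1 <;> simp [GTy.size] at hn
  | succ n ih =>
    intro t1 t2 t3 t4 t1' t2' t3' t4' a b hn hp1 hp2 hp3 hp4 h
    cases hp1 with
    | @base B1 =>
      cases hp2 with
      | @base B2 =>
        cases hp3 with
        | @base B3 =>
          cases hp4 with
          | @base B4 =>
            rw [ctrT.eq_1] at h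
            split at h
            · rename_i hB
              obtain ⟨rfl, rfl, rfl⟩ := hB
              simp only [Option.some.injEq, Prod.mk.injEq] at h
              obtain ⟨ha, hb⟩ := h; subst ha; subst hb
              exact ⟨_, _, by rw [ctrT.eq_1]; simp, .base, .base⟩
            · exact absurd h (by simp)
          | arrow _ _ _ _ => rw [ctrT.eq_def] at h; simp at h
          | all _ _ => rw [ctrT.eq_def] at h; simp at h
        | arrow _ _ _ _ => rw [ctrT.eq_def] at h; simp at h
        | all _ _ => rw [ctrT.eq_def] at h; simp at h
      | arrow _ _ _ _ => rw [ctrT.eq_def] at h; simp at h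
      | all _ _ => rw [ctrT.eq_def] at h; simp at h
    | @arrow a1 a1' sa1 sa1' b1 b1' sb1 sb1' ha1 hsa1 hb1 hsb1 =>
      cases hp2 with
      | @arrow a2 a2' sa2 sa2' b2 b2' sb2 sb2' ha2 hsa2 hb2 hsb2 =>
        cases hp3 with
        | @arrow a3 a3' sa3 sa3' b3 b3' sb3 sb3' ha3 hsa3 hb3 hsb3 =>
          cases hp4 with
          | @arrow a4 a4' sa4 sa4' b4 b4' sb4 sb4' ha4 hsa4 hb4 hsb4 =>
            rw [ctrT.eq_2] at h
            simp only [Bind.bind, Option.bind_eq_some_iff, Option.pure_def, Option.some.injEq,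
              Prod.mk.injEq, Prod.exists] at h
            obtain ⟨x1, x2, hx, y1, y2, hy, z1, z2, hz, w1, w2, hw, hab⟩ := h
            simp [GTy.size] at hn
            obtain ⟨X1, X2, hX, hpx1, hpx2⟩ := ih (by omega) ha4 ha3 ha2 ha1 hx
            obtain ⟨Y1, Y2, hY, hpy1, hpy2⟩ := aux_ctrE_mono hsa4 hsa3 hsa2 hsa1 hy
            obtain ⟨Z1, Z2, hZ, hpz1, hpz2⟩ := ih (by omega) hb1 hb2 hb3 hb4 hz
            obtain ⟨W1, W2, hW, hpw1, hpw2⟩ := aux_ctrE_mono hsb1 hsb2 hsb3 hsb4 hw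
            obtain ⟨ha, hb⟩ := hab; subst ha; subst hb
            refine ⟨X2.arrow Y2 Z1 W1, X1.arrow Y1 Z2 W2, ?_,
              .arrow hpx2 hpy2 hpz1 hpw1, .arrow hpx1 hpy1 hpz2 hpw2⟩
            rw [ctrT.eq_2]
            simp [hX, hY, hZ, hW]
          | base => rw [ctrT.eq_def] at h; simp at h
          | all _ _ => rw [ctrT.eq_def] at h; simp at h
        | base => rw [ctrT.eq_def] at h; simp at h
        | all _ _ => rw [ctrT.eq_def] at h; simp at h
      | base => rw [ctrT.eq_def] at h; simp at h
      | all _ _ => rw [ctrT.eq_def] at h; simp at h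
    | @all g1 g1' s1 s1' r1 hg1 hs1 =>
      cases hp2 with
      | @all g2 g2' s2 s2' r2 hg2 hs2 =>
        cases hp3 with
        | @all g3 g3' s3 s3' r3 hg3 hs3 =>
          cases hp4 with
          | @all g4 g4' s4 s4' r4 hg4 hs4 =>
            rw [ctrT.eq_3] at h
            split at h
            · rename_i hr
              obtain ⟨rfl, rfl, rfl⟩ := hr
              simp only [Bind.bind, Option.bind_eq_some_iff, Option.pure_def, Option.some.injEq,
                Prod.mk.injEq, Prod.exists] at h
              obtain ⟨x1, x2, hx, y1, y2, hy, hab⟩ := h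
              simp [GTy.size] at hn
              obtain ⟨X1, X2, hX, hpx1, hpx2⟩ := ih (by omega) hg1 hg2 hg3 hg4 hx
              obtain ⟨Y1, Y2, hY, hpy1, hpy2⟩ := aux_ctrE_mono hs1 hs2 hs3 hs4 hy
              obtain ⟨ha, hb⟩ := hab; subst ha; subst hb
              refine ⟨.all r1 X1 Y1, .all r1 X2 Y2, ?_, .all hpx1 hpy1, .all hpx2 hpy2⟩
              rw [ctrT.eq_3]
              simp [hX, hY]
            · exact absurd h (by simp)
          | base => rw [ctrT.eq_def] at h; simp at h
          | arrow _ _ _ _ => rw [ctrT.eq_def] at h; simp at h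
        | base => rw [ctrT.eq_def] at h; simp at h
        | arrow _ _ _ _ => rw [ctrT.eq_def] at h; simp at h
      | base => rw [ctrT.eq_def] at h; simp at h
      | arrow _ _ _ _ => rw [ctrT.eq_def] at h; simp at h

theorem aux_ctrC_mono {e1 e1' e2 e2' ε : Ev}
    (h1 : EvPrec e1 e1') (h2 : EvPrec e2 e2')
    (h : ctrC e1 e2 = some ε) :
    ∃ ε', ctrC e1' e2' = some ε' ∧ EvPrec ε ε' := by
  unfold ctrC at h ⊢
  simp only [Bind.bind, Option.bind_eq_some_iff, Option.pure_def, Option.some.injEq,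
    Prod.mk.injEq, Prod.exists] at h ⊢
  obtain ⟨g1, g4, hg, s1, s4, hs, hε⟩ := h
  obtain ⟨G1, G4, hG, hpg1, hpg4⟩ := aux_ctrT_mono
    (e1.1.1.size + e1.2.1.size + e2.1.1.size + e2.2.1.size) le_rfl
    h1.1.1 h1.2.1 h2.1.1 h2.2.1 hg
  obtain ⟨S1, S4, hS, hps1, hps4⟩ := aux_ctrE_mono h1.1.2 h1.2.2 h2.1.2 h2.2.2 hs
  subst hε
  exact ⟨G1, S1, G4, S4, ⟨_, _, hG, _, _, hS, ⟨rfl, rfl⟩, rfl, rfl⟩,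
    ⟨⟨hpg1, hps1⟩, ⟨hpg4, hps4⟩⟩⟩
theorem aux_domC_mono {T T' D : CTy} (hT : CTyPrec T T') (h : domC T = some D) :
    ∃ D', domC T' = some D' ∧ CTyPrec D D' := by
  obtain ⟨g, S⟩ := T
  obtain ⟨g', S'⟩ := T'
  obtain ⟨hg, hS⟩ := hT
  cases hg with
  | base => simp [domC] at h
  | arrow h1 hS1 h2 hS2 =>
      simp only [domC, Option.some.injEq] at h; subst h
      exact ⟨_, rfl, h1, hS1⟩
  | all _ _ => simp [domC] at h

theorem aux_codC_mono {T T' D : CTy} (hT : CTyPrec T T') (h : codC T = some D) :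
    ∃ D', codC T' = some D' ∧ CTyPrec D D' := by
  obtain ⟨g, S⟩ := T
  obtain ⟨g', S'⟩ := T'
  obtain ⟨hg, hS⟩ := hT
  cases hg with
  | base => simp [codC] at h
  | arrow h1 hS1 h2 hS2 =>
      simp only [codC, Option.some.injEq] at h; subst h
      exact ⟨_, rfl, h2, aux_addE_mono hS2 hS⟩
  | all _ _ => simp [codC] at h

theorem aux_instC_mono {T T' D : CTy} {Sr Sr' : GEnv} (hT : CTyPrec T T')
    (hr : precE Sr Sr') (h : instC T Sr = some D) :
    ∃ D', instC T' Sr' = some D' ∧ CTyPrec D D' := by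
  obtain ⟨g, S⟩ := T
  obtain ⟨g', S'⟩ := T'
  obtain ⟨hg, hS⟩ := hT
  cases hg with
  | base => simp [instC] at h
  | arrow _ _ _ _ => simp [instC] at h
  | all hg' hSg =>
      simp only [instC, Option.some.injEq] at h; subst h
      exact ⟨_, rfl, aux_substT_mono hr hg',
        aux_addE_mono (aux_substDVE_mono hr hSg) hS⟩

theorem aux_domEv_mono {ε ε' δ : Ev} (hε : EvPrec ε ε') (h : domEv ε = some δ) :
    ∃ δ', domEv ε' = some δ' ∧ EvPrec δ δ' := by
  unfold domEv at h ⊢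
  simp only [Bind.bind, Option.bind_eq_some_iff, Option.pure_def, Option.some.injEq] at h ⊢
  obtain ⟨d2, hd2, d1, hd1, hδ⟩ := h; subst hδ
  obtain ⟨D2, hD2, hp2⟩ := aux_domC_mono hε.2 hd2
  obtain ⟨D1, hD1, hp1⟩ := aux_domC_mono hε.1 hd1
  exact ⟨_, ⟨_, hD2, _, hD1, rfl⟩, hp2, hp1⟩

theorem aux_codEv_mono {ε ε' δ : Ev} (hε : EvPrec ε ε') (h : codEv ε = some δ) :
    ∃ δ', codEv ε' = some δ' ∧ EvPrec δ δ' := by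
  unfold codEv at h ⊢
  simp only [Bind.bind, Option.bind_eq_some_iff, Option.pure_def, Option.some.injEq] at h ⊢
  obtain ⟨d1, hd1, d2, hd2, hδ⟩ := h; subst hδ
  obtain ⟨D1, hD1, hp1⟩ := aux_codC_mono hε.1 hd1
  obtain ⟨D2, hD2, hp2⟩ := aux_codC_mono hε.2 hd2
  exact ⟨_, ⟨_, hD1, _, hD2, rfl⟩, hp1, hp2⟩

theorem aux_instEv_mono {ε ε' δ : Ev} {Sr Sr' : GEnv} (hε : EvPrec ε ε')
    (hr : precE Sr Sr') (h : instEv ε Sr = some δ) :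
    ∃ δ', instEv ε' Sr' = some δ' ∧ EvPrec δ δ' := by
  unfold instEv at h ⊢
  simp only [Bind.bind, Option.bind_eq_some_iff, Option.pure_def, Option.some.injEq] at h ⊢
  obtain ⟨d1, hd1, d2, hd2, hδ⟩ := h; subst hδ
  obtain ⟨D1, hD1, hp1⟩ := aux_instC_mono hε.1 hr hd1
  obtain ⟨D2, hD2, hp2⟩ := aux_instC_mono hε.2 hr hd2
  exact ⟨_, ⟨_, hD1, _, hD2, rfl⟩, hp1, hp2⟩

theorem aux_opCTy_mono {o : Op} {Ta Ta' Tb Tb' T : CTy}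
    (ha : CTyPrec Ta Ta') (hb : CTyPrec Tb Tb') (h : opCTy o Ta Tb = some T) :
    ∃ T', opCTy o Ta' Tb' = some T' ∧ CTyPrec T T' := by
  obtain ⟨ga, Sa⟩ := Ta
  obtain ⟨gb, Sb⟩ := Tb
  obtain ⟨ga', Sa'⟩ := Ta'
  obtain ⟨gb', Sb'⟩ := Tb'
  obtain ⟨hga, hSa⟩ := ha
  obtain ⟨hgb, hSb⟩ := hb
  cases hga with
  | @base Ba =>
    cases hgb with
    | @base Bb =>
      cases o <;> cases Ba <;> cases Bb <;> simp only [opCTy, Option.some.injEq] at h <;>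
        first
        | (subst h; exact ⟨_, rfl, .base, aux_scaleE_mono (aux_addE_mono hSa hSb)⟩)
        | (subst h; exact ⟨_, rfl, .base, aux_addE_mono hSa hSb⟩)
        | exact absurd h (by simp)
    | arrow _ _ _ _ => cases o <;> simp [opCTy] at h
    | all _ _ => cases o <;> simp [opCTy] at h
  | arrow _ _ _ _ => cases o <;> simp [opCTy] at h
  | all _ _ => cases o <;> simp [opCTy] at h

theorem aux_opEv_mono {o : Op} {ε1 ε1' ε2 ε2' ε : Ev}
    (h1 : EvPrec ε1 ε1') (h2 : EvPrec ε2 ε2') (h : opEv o ε1 ε2 = some ε) :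
    ∃ ε', opEv o ε1' ε2' = some ε' ∧ EvPrec ε ε' := by
  unfold opEv at h ⊢
  simp only [Bind.bind, Option.bind_eq_some_iff, Option.pure_def, Option.some.injEq] at h ⊢
  obtain ⟨a, hA, b, hB, hε⟩ := h; subst hε
  obtain ⟨A', hA', hpa⟩ := aux_opCTy_mono h1.1 h2.1 hA
  obtain ⟨B', hB', hpb⟩ := aux_opCTy_mono h1.2 h2.2 hB
  exact ⟨_, ⟨_, hA', _, hB', rfl⟩, hpa, hpb⟩
theorem aux_substCTy_mono {r : String} {Sr Sr' : GEnv} {T T' : CTy}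
    (hr : precE Sr Sr') (h : CTyPrec T T') :
    CTyPrec (substCTy r Sr T) (substCTy r Sr' T') :=
  ⟨aux_substT_mono hr h.1, aux_substDVE_mono hr h.2⟩

theorem aux_substEv_mono {r : String} {Sr Sr' : GEnv} {ε ε' : Ev}
    (hr : precE Sr Sr') (h : EvPrec ε ε') :
    EvPrec (substEv r Sr ε) (substEv r Sr' ε') :=
  ⟨aux_substCTy_mono hr h.1, aux_substCTy_mono hr h.2⟩

theorem aux_csubst_prec {x : String} {v v' : CExpr} (hv : CPrec v v') :
    ∀ {e e'}, CPrec e e' → CPrec (csubst x v e) (csubst x v' e') := by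
  intro e e' h
  induction h with
  | const => exact .const
  | op h1 h2 ih1 ih2 => exact .op ih1 ih2
  | @var y =>
      by_cases hy : y = x
      · simpa [csubst, hy] using hv
      · simpa [csubst, hy] using CPrec.var
  | @lam T T' e e' y hT he ih =>
      by_cases hy : y = x
      · simpa [csubst, hy] using CPrec.lam hT he
      · simpa [csubst, hy] using CPrec.lam hT ih
  | app h1 h2 ih1 ih2 => exact .app ih1 ih2
  | tlam h ih => exact .tlam ih
  | tapp h hS ih => exact .tapp ih hS
  | ascr hε he hT ih => exact .ascr hε ih hT
  | err => exact .err

theorem aux_dsubst_prec {r : String} {Sr Sr' : GEnv} (hr : precE Sr Sr') :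
    ∀ {e e'}, CPrec e e' → CPrec (dsubst r Sr e) (dsubst r Sr' e') := by
  intro e e' h
  induction h with
  | const => exact .const
  | op h1 h2 ih1 ih2 => exact .op ih1 ih2
  | var => exact .var
  | lam hT he ih => exact .lam (aux_substCTy_mono hr hT) ih
  | app h1 h2 ih1 ih2 => exact .app ih1 ih2
  | @tlam e e' r' h ih =>
      by_cases hrr : r' = r
      · simpa [dsubst, hrr] using CPrec.tlam h
      · simpa [dsubst, hrr] using CPrec.tlam ih
  | tapp h hS ih => exact .tapp ih (aux_substDVE_mono hr hS)
  | ascr hε he hT ih => exact .ascr (aux_substEv_mono hr hε) ih (aux_substCTy_mono hr hT)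
  | err => exact .err

theorem aux_val_prec : ∀ {a b}, CPrec a b → (Simple a → Simple b) ∧ (IsVal a → IsVal b) := by
  intro a b h
  induction h with
  | const => exact ⟨(fun _ => .const), (fun h => by cases h)⟩
  | op _ _ _ _ => exact ⟨(fun h => by cases h), (fun h => by cases h)⟩
  | var => exact ⟨(fun h => by cases h), (fun h => by cases h)⟩
  | lam _ _ _ => exact ⟨(fun _ => .lam), (fun h => by cases h)⟩
  | app _ _ _ _ => exact ⟨(fun h => by cases h), (fun h => by cases h)⟩
  | tlam h ih =>
      exact ⟨(fun hs => by cases hs with | tlam hv => exact .tlam (ih.2 hv)),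
        (fun h => by cases h)⟩
  | tapp _ _ _ => exact ⟨(fun h => by cases h), (fun h => by cases h)⟩
  | ascr hε he hT ih =>
      exact ⟨(fun h => by cases h), (fun h => by cases h with | mk hs => exact .mk (ih.1 hs))⟩
  | err => exact ⟨(fun h => by cases h), (fun h => by cases h)⟩

/-- Error at evaluation position. -/
inductive AuxErrAt : CExpr → Prop
  | err : AuxErrAt .err
  | opL : AuxErrAt e1 → AuxErrAt (.op o e1 e2)
  | opR : IsVal v → AuxErrAt e2 → AuxErrAt (.op o v e2)
  | appL : AuxErrAt e1 → AuxErrAt (.app e1 e2)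
  | appR : IsVal v → AuxErrAt e2 → AuxErrAt (.app v e2)
  | tapp : AuxErrAt e → AuxErrAt (.tapp e S)
  | tlam : AuxErrAt e → AuxErrAt (.tlam r e)
  | ascr : AuxErrAt e → AuxErrAt (.ascr ε e T)

theorem aux_errAt_not_simple : ∀ {e}, AuxErrAt e → ¬ Simple e ∧ ¬ IsVal e := by
  intro e h
  induction h with
  | err => exact ⟨(fun h => by cases h), (fun h => by cases h)⟩
  | opL _ _ => exact ⟨(fun h => by cases h), (fun h => by cases h)⟩
  | opR _ _ _ => exact ⟨(fun h => by cases h), (fun h => by cases h)⟩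
  | appL _ _ => exact ⟨(fun h => by cases h), (fun h => by cases h)⟩
  | appR _ _ _ => exact ⟨(fun h => by cases h), (fun h => by cases h)⟩
  | tapp _ _ => exact ⟨(fun h => by cases h), (fun h => by cases h)⟩
  | tlam h ih =>
      exact ⟨(fun hs => by cases hs with | tlam hv => exact ih.2 hv), (fun h => by cases h)⟩
  | ascr h ih =>
      exact ⟨(fun hs => by cases hs), (fun hv => by cases hv with | mk hs => exact ih.1 hs)⟩

theorem aux_step_not_val : ∀ {a b}, Step a b → ¬ Simple a ∧ ¬ IsVal a := by
  intro a b h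
  induction h with
  | ascrOk _ _ => exact ⟨(fun h => by cases h), (fun h => by cases h with | mk hs => cases hs)⟩
  | ascrErr _ _ => exact ⟨(fun h => by cases h), (fun h => by cases h with | mk hs => cases hs)⟩
  | ascrC _ ih => exact ⟨(fun h => by cases h), (fun h => by cases h with | mk hs => exact ih.1 hs)⟩
  | ascrErrP => exact ⟨(fun h => by cases h), (fun h => by cases h with | mk hs => cases hs)⟩
  | tlamC _ ih => exact ⟨(fun h => by cases h with | tlam hv => exact ih.2 hv), (fun h => by cases h)⟩
  | tlamErr => exact ⟨(fun h => by cases h with | tlam hv => cases hv), (fun h => by cases h)⟩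
  | _ => exact ⟨(fun h => by cases h), (fun h => by cases h)⟩

theorem aux_errAt_step : ∀ {e e'}, Step e e' → AuxErrAt e → AuxErrAt e' := by
  intro e e' hs
  induction hs with
  | op _ _ _ => intro h; cases h with
      | opL h => exact absurd (IsVal.mk .const) (aux_errAt_not_simple h).2
      | opR _ h => exact absurd (IsVal.mk .const) (aux_errAt_not_simple h).2
  | @appOk u ε εd ε1 ε' εc T Tc x T1' eb T1 hu hd hc hcod hcodC =>
      intro h; cases h with
      | appL h => exact absurd (IsVal.mk .lam) (aux_errAt_not_simple h).2
      | appR _ h => exact absurd (IsVal.mk hu) (aux_errAt_not_simple h).2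
  | appErr _ _ _ => intro _; exact .err
  | inst hv _ _ => intro h; cases h with
      | tapp h => exact absurd (IsVal.mk (.tlam hv)) (aux_errAt_not_simple h).2
  | ascrOk hu _ => intro h; cases h with
      | ascr h => exact absurd (IsVal.mk hu) (aux_errAt_not_simple h).2
  | ascrErr _ _ => intro _; exact .err
  | opL hs ih => intro h; cases h with
      | opL h => exact .opL (ih h)
      | opR hv _ => exact absurd hv (aux_step_not_val hs).2
  | opR hv hs ih => intro h; cases h with
      | opL h => exact absurd hv (aux_errAt_not_simple h).2
      | opR hv' h => exact .opR hv' (ih h)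
  | appL hs ih => intro h; cases h with
      | appL h => exact .appL (ih h)
      | appR hv _ => exact absurd hv (aux_step_not_val hs).2
  | appR hv hs ih => intro h; cases h with
      | appL h => exact absurd hv (aux_errAt_not_simple h).2
      | appR hv' h => exact .appR hv' (ih h)
  | tappC hs ih => intro h; cases h with
      | tapp h => exact .tapp (ih h)
  | tlamC hs ih => intro h; cases h with
      | tlam h => exact .tlam (ih h)
  | ascrC hs ih => intro h; cases h with
      | ascr h => exact .ascr (ih h)
  | opLErr => intro _; exact .err
  | opRErr _ => intro _; exact .err
  | appLErr => intro _; exact .err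
  | appRErr _ => intro _; exact .err
  | tappErr => intro _; exact .err
  | tlamErr => intro _; exact .err
  | ascrErrP => intro _; exact .err
theorem aux_steps_opL {o a a' b} (h : Steps a a') : Steps (.op o a b) (.op o a' b)  := by
  unfold Steps at *
  exact Relation.ReflTransGen.lift (fun x => CExpr.op o x b) (fun _ _ s => Step.opL s) _ _ h

theorem aux_steps_opR {o v b b'} (hv : IsVal v) (h : Steps b b') :
    Steps (.op o v b) (.op o v b')  := by
  unfold Steps at *
  exact Relation.ReflTransGen.lift (fun x => CExpr.op o v x) (fun _ _ s => Step.opR hv s) _ _ h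

theorem aux_steps_appL {a a' b} (h : Steps a a') : Steps (.app a b) (.app a' b)  := by
  unfold Steps at *
  exact Relation.ReflTransGen.lift (fun x => CExpr.app x b) (fun _ _ s => Step.appL s) _ _ h

theorem aux_steps_appR {v b b'} (hv : IsVal v) (h : Steps b b') :
    Steps (.app v b) (.app v b')  := by
  unfold Steps at *
  exact Relation.ReflTransGen.lift (fun x => CExpr.app v x) (fun _ _ s => Step.appR hv s) _ _ h

theorem aux_steps_tapp {a a' S} (h : Steps a a') : Steps (.tapp a S) (.tapp a' S)  := by
  unfold Steps at *
  exact Relation.ReflTransGen.lift (fun x => CExpr.tapp x S) (fun _ _ s => Step.tappC s) _ _ h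

theorem aux_steps_tlam {r a a'} (h : Steps a a') : Steps (.tlam r a) (.tlam r a')  := by
  unfold Steps at *
  exact Relation.ReflTransGen.lift (fun x => CExpr.tlam r x) (fun _ _ s => Step.tlamC s) _ _ h

theorem aux_steps_ascr {ε a a' T} (h : Steps a a') : Steps (.ascr ε a T) (.ascr ε a' T)  := by
  unfold Steps at *
  exact Relation.ReflTransGen.lift (fun x => CExpr.ascr ε x T) (fun _ _ s => Step.ascrC s) _ _ h

theorem aux_sim : ∀ {c1 c1'}, Step c1 c1' → ∀ {c2}, CPrec c1 c2 →
    AuxErrAt c1' ∨ ∃ c2', Steps c2 c2' ∧ CPrec c1' c2' := by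
  intro c1 c1' hstep
  induction hstep with
  | @op o c1c c2c c ε1 ε2 ε T1 T2 T hden hEv hTy =>
      intro c2 hp
      cases hp with
      | op hA hB =>
        cases hA with
        | ascr hε1 hc1 hT1 =>
          cases hc1 with
          | const =>
            cases hB with
            | ascr hε2 hc2 hT2 =>
              cases hc2 with
              | const =>
                obtain ⟨ε', hEv', hpe⟩ := aux_opEv_mono hε1 hε2 hEv
                obtain ⟨T', hTy', hpt⟩ := aux_opCTy_mono hT1 hT2 hTy
                exact Or.inr ⟨_, Relation.ReflTransGen.single (Step.op hden hEv' hTy'),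
                  .ascr hpe .const hpt⟩
  | @appOk u ε εd ε1 ε' εc T Tc x T1' eb T1 hu hd hc hcod hcodC =>
      intro c2 hp
      cases hp with
      | app hF hA =>
        cases hF with
        | ascr hε hlam hT =>
          cases hlam with
          | lam hT1' heb =>
            cases hA with
            | ascr hε1 hu' hT1 =>
              obtain ⟨εd', hd', hpd⟩ := aux_domEv_mono hε hd
              obtain ⟨ε'', hc', hpc⟩ := aux_ctrC_mono hε1 hpd hc
              obtain ⟨εc', hcod', hpcod⟩ := aux_codEv_mono hε hcod
              obtain ⟨Tc', hcodC', hptc⟩ := aux_codC_mono hT hcodC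
              refine Or.inr ⟨_, Relation.ReflTransGen.single
                (Step.appOk ((aux_val_prec hu').1 hu) hd' hc' hcod' hcodC'), ?_⟩
              exact .ascr hpcod
                (aux_csubst_prec (.ascr hpc hu' hT1') heb) hptc
  | appErr _ _ _ => intro c2 hp; exact Or.inl .err
  | @inst v ε Sr ε' T T' r hv hiE hiC =>
      intro c2 hp
      cases hp with
      | tapp hF hSr =>
        cases hF with
        | ascr hε htl hT =>
          cases htl with
          | tlam hvv =>
            obtain ⟨ε'', hiE', hpe⟩ := aux_instEv_mono hε hSr hiE
            obtain ⟨T'', hiC', hpt⟩ := aux_instC_mono hT hSr hiC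
            exact Or.inr ⟨_, Relation.ReflTransGen.single
              (Step.inst ((aux_val_prec hvv).2 hv) hiE' hiC'),
              .ascr hpe (aux_dsubst_prec hSr hvv) hpt⟩
  | @ascrOk u ε' ε ε'' T' T hu hc =>
      intro c2 hp
      cases hp with
      | ascr hε hinner hT =>
        cases hinner with
        | ascr hε' hu' hT' =>
          obtain ⟨E'', hc', hpe⟩ := aux_ctrC_mono hε' hε hc
          exact Or.inr ⟨_, Relation.ReflTransGen.single
            (Step.ascrOk ((aux_val_prec hu').1 hu) hc'), .ascr hpe hu' hT⟩
  | ascrErr _ _ => intro c2 hp; exact Or.inl .err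
  | opL hs ih =>
      intro c2 hp
      cases hp with
      | op hA hB =>
        rcases ih hA with herr | ⟨f1', hs2, hp'⟩
        · exact Or.inl (.opL herr)
        · exact Or.inr ⟨_, aux_steps_opL hs2, .op hp' hB⟩
  | opR hv hs ih =>
      intro c2 hp
      cases hp with
      | op hA hB =>
        rcases ih hB with herr | ⟨f2', hs2, hp'⟩
        · exact Or.inl (.opR hv herr)
        · exact Or.inr ⟨_, aux_steps_opR ((aux_val_prec hA).2 hv) hs2, .op hA hp'⟩
  | appL hs ih =>
      intro c2 hp
      cases hp with
      | app hA hB =>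
        rcases ih hA with herr | ⟨f1', hs2, hp'⟩
        · exact Or.inl (.appL herr)
        · exact Or.inr ⟨_, aux_steps_appL hs2, .app hp' hB⟩
  | appR hv hs ih =>
      intro c2 hp
      cases hp with
      | app hA hB =>
        rcases ih hB with herr | ⟨f2', hs2, hp'⟩
        · exact Or.inl (.appR hv herr)
        · exact Or.inr ⟨_, aux_steps_appR ((aux_val_prec hA).2 hv) hs2, .app hA hp'⟩
  | tappC hs ih =>
      intro c2 hp
      cases hp with
      | tapp hE hS =>
        rcases ih hE with herr | ⟨f', hs2, hp'⟩
        · exact Or.inl (.tapp herr)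
        · exact Or.inr ⟨_, aux_steps_tapp hs2, .tapp hp' hS⟩
  | tlamC hs ih =>
      intro c2 hp
      cases hp with
      | tlam hE =>
        rcases ih hE with herr | ⟨f', hs2, hp'⟩
        · exact Or.inl (.tlam herr)
        · exact Or.inr ⟨_, aux_steps_tlam hs2, .tlam hp'⟩
  | ascrC hs ih =>
      intro c2 hp
      cases hp with
      | ascr hε hE hT =>
        rcases ih hE with herr | ⟨f', hs2, hp'⟩
        · exact Or.inl (.ascr herr)
        · exact Or.inr ⟨_, aux_steps_ascr hs2, .ascr hε hp' hT⟩
  | opLErr => intro c2 hp; exact Or.inl .err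
  | opRErr _ => intro c2 hp; exact Or.inl .err
  | appLErr => intro c2 hp; exact Or.inl .err
  | appRErr _ => intro c2 hp; exact Or.inl .err
  | tappErr => intro c2 hp; exact Or.inl .err
  | tlamErr => intro c2 hp; exact Or.inl .err
  | ascrErrP => intro c2 hp; exact Or.inl .err

theorem aux_errAt_steps {a b} (h : Steps a b) (ha : AuxErrAt a) : AuxErrAt b := by
  induction h with
  | refl => exact ha
  | tail _ hstep ih => exact aux_errAt_step hstep ih

theorem aux_multi : ∀ {c1 v}, Steps c1 v → IsVal v → ∀ {c2}, CPrec c1 c2 →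
    ∃ v2, Steps c2 v2 ∧ IsVal v2 ∧ CPrec v v2 := by
  intro c1 v h
  induction h using Relation.ReflTransGen.head_induction_on with
  | refl => exact fun hv c2 hp => ⟨c2, Relation.ReflTransGen.refl, (aux_val_prec hp).2 hv, hp⟩
  | head hstep hrest ih =>
    intro hv c2 hp
    rcases aux_sim hstep hp with herr | ⟨c2', hs2, hp'⟩
    · exact absurd hv (aux_errAt_not_simple (aux_errAt_steps hrest herr)).2
    · obtain ⟨v2, hs2', hv2, hp2⟩ := ih hv hp'
      exact ⟨v2, hs2.trans hs2', hv2, hp2⟩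
/-- Precision on type environments. -/
def AuxEnvPrec (Γ Γ' : GTEnv) : Prop :=
  ∀ x T, Γ x = some T → ∃ T', Γ' x = some T' ∧ CTyPrec T T'

theorem aux_EnvPrec_update {Γ Γ' : GTEnv} {x : String} {T T' : CTy}
    (h : AuxEnvPrec Γ Γ') (hT : CTyPrec T T') :
    AuxEnvPrec (Function.update Γ x (some T)) (Function.update Γ' x (some T')) := by
  intro y Ty hy
  by_cases hxy : y = x
  · subst hxy
    simp only [Function.update_self] at hy ⊢
    cases hy
    exact ⟨T', rfl, hT⟩
  · simp only [Function.update_of_ne hxy] at hy ⊢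
    exact h y Ty hy

theorem aux_elab_mono : ∀ {Γ e c T}, Elab Γ e c T →
    ∀ {Γ' e2 c' T'}, AuxEnvPrec Γ Γ' → GPrec e e2 → Elab Γ' e2 c' T' →
    CPrec c c' ∧ CTyPrec T T' := by
  intro Γ e c T h1
  induction h1 with
  | @const c' ε Γ hi =>
      intro Γ' e2 c2 T2 hΓ hp h2
      cases hp
      cases h2 with
      | const hi' =>
        cases hi.symm.trans hi'
        exact ⟨.ascr (aux_EvPrec_refl _) .const (aux_CTyPrec_refl _), aux_CTyPrec_refl _⟩
  | @op Γ a a' Ta b b' Tb o T ha hb hT iha ihb =>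
      intro Γ' e2 c2 T2 hΓ hp h2
      cases hp with
      | op hpa hpb =>
        cases h2 with
        | op ha2 hb2 hT2 =>
          obtain ⟨hca, hta⟩ := iha hΓ hpa ha2
          obtain ⟨hcb, htb⟩ := ihb hΓ hpb hb2
          obtain ⟨T2', hT2', hpt⟩ := aux_opCTy_mono hta htb hT
          cases hT2.symm.trans hT2'
          exact ⟨.op hca hcb, hpt⟩
  | @var Γ x T hx =>
      intro Γ' e2 c2 T2 hΓ hp h2
      cases hp
      cases h2 with
      | var hx2 =>
        obtain ⟨T2', hx2', hpt⟩ := hΓ _ _ hx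
        cases hx2.symm.trans hx2'
        exact ⟨.var, hpt⟩
  | @lam Γ x T1 e e' T2 ε he hi ih =>
      intro Γ' e2 c2 Tr hΓ hp h2
      cases hp with
      | lam hT1 hpe =>
        rename_i T1b e2b
        cases h2 with
        | lam he2 hi2 =>
          rename_i e2c T2b ε2
          obtain ⟨hce, hte⟩ := ih (aux_EnvPrec_update hΓ hT1) hpe he2
          have hA : CTyPrec (GTy.arrow T1.1 T1.2 T2.1 T2.2, zeroE)
              (GTy.arrow T1b.1 T1b.2 T2b.1 T2b.2, zeroE) :=
            ⟨.arrow hT1.1 hT1.2 hte.1 hte.2, aux_precE_refl zeroE⟩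
          obtain ⟨ε0, hi2', hpε⟩ := aux_interC_mono hA hA hi
          cases hi2.symm.trans hi2'
          exact ⟨.ascr hpε (.lam hT1 hce) hA, hA⟩
  | @app Γ a a' Ta b b' Tb Td ε2 Tc ha hb hd hi hc iha ihb =>
      intro Γ' e2 c2 T2 hΓ hp h2
      cases hp with
      | app hpa hpb =>
        cases h2 with
        | app ha2 hb2 hd2 hi2 hc2 =>
          obtain ⟨hca, hta⟩ := iha hΓ hpa ha2
          obtain ⟨hcb, htb⟩ := ihb hΓ hpb hb2
          obtain ⟨Td2, hd2', hptd⟩ := aux_domC_mono hta hd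
          cases hd2.symm.trans hd2'
          obtain ⟨ε2', hi2', hpε⟩ := aux_interC_mono htb hptd hi
          cases hi2.symm.trans hi2'
          obtain ⟨Tc2, hc2', hptc⟩ := aux_codC_mono hta hc
          cases hc2.symm.trans hc2'
          exact ⟨.app hca (.ascr hpε hcb hptd), hptc⟩
  | @tlam Γ e e' T r ε he hi ih =>
      intro Γ' e2 c2 T2 hΓ hp h2
      cases hp with
      | tlam hpe =>
        rename_i e2b
        cases h2 with
        | tlam he2 hi2 =>
          rename_i e2c T2b ε2
          obtain ⟨hce, hte⟩ := ih hΓ hpe he2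
          have hA : CTyPrec (GTy.all r T.1 T.2, zeroE)
              (GTy.all r T2b.1 T2b.2, zeroE) :=
            ⟨.all hte.1 hte.2, aux_precE_refl zeroE⟩
          obtain ⟨ε0, hi2', hpε⟩ := aux_interC_mono hA hA hi
          cases hi2.symm.trans hi2'
          exact ⟨.ascr hpε (.tlam hce) hA, hA⟩
  | @tapp Γ e e' T Sr T' he hiC ih =>
      intro Γ' e2 c2 T2 hΓ hp h2
      cases hp with
      | tapp hpe hSr =>
        cases h2 with
        | tapp he2 hiC2 =>
          obtain ⟨hce, hte⟩ := ih hΓ hpe he2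
          obtain ⟨T2', hiC2', hpt⟩ := aux_instC_mono hte hSr hiC
          cases hiC2.symm.trans hiC2'
          exact ⟨.tapp hce hSr, hpt⟩
  | @ascr Γ e e' T T' ε he hi ih =>
      intro Γ' e2 c2 T2 hΓ hp h2
      cases hp with
      | ascr hpe hT' =>
        cases h2 with
        | ascr he2 hi2 =>
          obtain ⟨hce, hte⟩ := ih hΓ hpe he2
          obtain ⟨ε0, hi2', hpε⟩ := aux_interC_mono hte hT' hi
          cases hi2.symm.trans hi2'
          exact ⟨.ascr hpε hce hT', hT'⟩
end GS


open GS in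
/-- Dynamic Gradual Guarantee (Proposition 3): if e₁ ⊑ e₂ are well-typed
closed GS expressions and e₁ evaluates (via its elaboration) to a value v₁,
then e₂ evaluates to a value v₂ with v₁ ⊑ v₂. -/
theorem dynamic_gradual_guarantee
    (e1 e2 : GExpr) (hp : GPrec e1 e2)
    (e1' e2' : CExpr) (T1 T2 : CTy)
    (h1 : Elab emptyEnv e1 e1' T1) (h2 : Elab emptyEnv e2 e2' T2)
    (v1 : CExpr) (hv1 : EvalsTo e1' v1) :
    ∃ v2, EvalsTo e2' v2 ∧ CPrec v1 v2 := by
  have hΓ : AuxEnvPrec emptyEnv emptyEnv := by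
    intro x T hx; simp [emptyEnv] at hx
  obtain ⟨hc, _⟩ := aux_elab_mono h1 hΓ hp h2
  obtain ⟨v2, hs2, hv2, hp2⟩ := aux_multi hv1.1 hv1.2 hc
  exact ⟨v2, ⟨hs2, hv2⟩, hp2⟩
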